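/- Let R be a commutative ring, V and W free R-modules of rank g with bases e₁,…,e_g and f₁,…,f_g. In the exterior algebra Λ(V ⊕ W), ∏_{n=1}^{g} (1 + e_n ∧ f_n) = Σ_{I ⊆ {1,…,g}} (−1)^{|I|(|I|−1)/2} · e_I ∧ f_I, where e_I (resp. f_I) is the wedge of the e_n (resp. f_n) with n ∈ I in increasing order. -/

import Mathlib

section Aux

variable {A : Type*} [Ring A] {α : Type*} [LinearOrder α] [DecidableEq α]

private lemma mul_list_prod_anticomm (b : A) :
    ∀ l : List A, (∀ x ∈ l, b * x = -(x * b)) →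
      b * l.prod = ((-1 : ℤ) ^ l.length) • (l.prod * b) := by
  intro l
  induction l with
  | nil => simp
  | cons x t ih =>
    intro h
    simp only [List.prod_cons, List.length_cons]
    rw [← mul_assoc, h x (by simp), neg_mul, mul_assoc,
      ih (fun y hy => h y (List.mem_cons_of_mem _ hy)), mul_smul_comm, ← neg_smul,
      pow_succ, mul_neg_one, mul_assoc]

omit [LinearOrder α] [DecidableEq α] in
private lemma prod_map_pair (a b : α → A)
    (hab : ∀ i j, b i * a j = -(a j * b i)) :
    ∀ l : List α, (l.map (fun n => a n * b n)).prod =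
      ((-1 : ℤ) ^ (l.length * (l.length - 1) / 2)) •
        ((l.map a).prod * (l.map b).prod) := by
  intro l
  induction l with
  | nil => simp
  | cons n t ih =>
    simp only [List.map_cons, List.prod_cons, List.length_cons, ih]
    have hb : b n * (t.map a).prod = ((-1 : ℤ) ^ t.length) • ((t.map a).prod * b n) := by
      rw [mul_list_prod_anticomm]
      · simp
      · intro x hx
        obtain ⟨j, _, rfl⟩ := List.mem_map.mp hx
        exact hab n j
    set k := t.length with hk
    have hexp : (k + 1) * (k + 1 - 1) / 2 = k * (k - 1) / 2 + k := by
      rcases k with _ | m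
      · simp
      · simp only [Nat.add_sub_cancel]
        rw [Nat.succ_mul, Nat.mul_succ]
        omega
    rw [hexp, pow_add, mul_smul_comm]
    have h1 : a n * b n * ((t.map a).prod * (t.map b).prod) =
        a n * (b n * (t.map a).prod) * (t.map b).prod := by noncomm_ring
    rw [h1, hb, mul_smul_comm, smul_mul_assoc, smul_smul]
    congr 1
    noncomm_ring

private lemma prod_one_add_eq_sum (x : α → A) :
    ∀ l : List α, l.Pairwise (· < ·) →
      (l.map (fun n => 1 + x n)).prod =
        ∑ I ∈ l.toFinset.powerset, ((I.sort (· ≤ ·)).map x).prod := by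
  intro l
  induction l with
  | nil => simp
  | cons n t ih =>
    intro hs
    have hs' : t.Pairwise (· < ·) := hs.of_cons
    have hn : ∀ b ∈ t, n < b := fun b hb => List.rel_of_pairwise_cons hs (a' := b) hb
    have hnt : n ∉ t.toFinset := by
      simp only [List.mem_toFinset]
      intro h
      exact lt_irrefl n (hn n h)
    simp only [List.map_cons, List.prod_cons, List.toFinset_cons, ih hs']
    rw [Finset.sum_powerset_insert hnt]
    have hins : ∀ I ∈ t.toFinset.powerset,
        (((insert n I).sort (· ≤ ·)).map x).prod =
          x n * ((I.sort (· ≤ ·)).map x).prod := by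
      intro I hI
      have hIsub := Finset.mem_powerset.mp hI
      have h1 : ∀ b ∈ I, n ≤ b := fun b hb =>
        le_of_lt (hn b (List.mem_toFinset.mp (hIsub hb)))
      have h2 : n ∉ I := fun h => lt_irrefl n (hn n (List.mem_toFinset.mp (hIsub h)))
      rw [Finset.sort_insert _ h1 h2, List.map_cons, List.prod_cons]
    rw [Finset.sum_congr rfl hins, ← Finset.mul_sum, add_mul, one_mul]

end Aux

open ExteriorAlgebra in
/-- `∏ₙ (1 + eₙ ∧ fₙ) = Σ_{I ⊆ {1,…,g}} (−1)^{|I|(|I|−1)/2} · e_I ∧ f_I` in the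
exterior algebra of `V ⊕ W`. -/
theorem prod_one_add_wedge_eq_sum {R : Type*} [CommRing R] {g : ℕ}
    (V W : Type*) [AddCommGroup V] [AddCommGroup W] [Module R V] [Module R W]
    (e : Module.Basis (Fin g) R V) (f : Module.Basis (Fin g) R W) :
    ((List.finRange g).map
        (fun n => 1 + ι R (M := V × W) (e n, 0) * ι R (M := V × W) (0, f n))).prod =
      ∑ I : Finset (Fin g),
        ((-1 : ℤ) ^ (I.card * (I.card - 1) / 2)) •
          (((I.sort (· ≤ ·)).map (fun n => ι R (M := V × W) (e n, 0))).prod *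
            ((I.sort (· ≤ ·)).map (fun n => ι R (M := V × W) (0, f n))).prod) := by
  set a : Fin g → ExteriorAlgebra R (V × W) := fun n => ι R (M := V × W) (e n, 0)
  set b : Fin g → ExteriorAlgebra R (V × W) := fun n => ι R (M := V × W) (0, f n)
  have hab : ∀ i j, b i * a j = -(a j * b i) := fun i j =>
    eq_neg_of_add_eq_zero_left (ι_add_mul_swap _ _)
  have hsorted : (List.finRange g).Pairwise (· < ·) := List.pairwise_lt_finRange g
  rw [prod_one_add_eq_sum (fun n => a n * b n) _ hsorted]
  simp only [List.toFinset_finRange, Finset.powerset_univ]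
  refine Finset.sum_congr rfl fun I _ => ?_
  rw [prod_map_pair a b hab, Finset.length_sort]
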